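/- Let X ∈ ℂ^{n1×n2×n3}, let T ∈ ℂ^{N3×n3} have full column rank, let Ω ⊆ [n1]×[n2]×[n3], let p ∈ (0,1], and let T(X) = U ⋆ S ⋆ V^H be the skinny t-SVD. Suppose ‖P_S T R_Ω T† P_S − P_S T T† P_S‖ ≤ 1/2 (operator norm with respect to the Frobenius norm, R_Ω = p⁻¹ S_Ω), and suppose H ∈ ℂ^{n1×n2×n3} satisfies S_Ω(H) = 0 and ‖P_{S⊥}(T(H))‖_* ≤ (p/(4 κ(T))) · ‖P_S(T(H))‖_F. Then H = 0. -/

import Mathlib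

namespace TC

open scoped BigOperators ComplexConjugate
open Matrix

/-- A third-order complex tensor. -/
abbrev Tensor (n1 n2 n3 : ℕ) := Fin n1 → Fin n2 → Fin n3 → ℂ

/-- The `k`-th frontal slice of a tensor. -/
def slice {n1 n2 n3 : ℕ} (A : Tensor n1 n2 n3) (k : Fin n3) : Matrix (Fin n1) (Fin n2) ℂ :=
  Matrix.of fun i j => A i j k

/-- The natural tensor-tensor product: slice-wise matrix multiplication. -/
noncomputable def tprod {n1 n2 l n3 : ℕ} (A : Tensor n1 n2 n3) (B : Tensor n2 l n3) : Tensor n1 l n3 :=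
  fun i j k => ∑ s, A i s k * B s j k

/-- Slice-wise conjugate transpose. -/
noncomputable def hconj {n1 n2 n3 : ℕ} (A : Tensor n1 n2 n3) : Tensor n2 n1 n3 :=
  fun i j k => (starRingEnd ℂ) (A j i k)

/-- Mode-3 product: apply the matrix `T` to every mode-3 fiber. -/
noncomputable def mode3 {n1 n2 m n : ℕ} (T : Matrix (Fin m) (Fin n) ℂ) (A : Tensor n1 n2 n) :
    Tensor n1 n2 m :=
  fun i j k => ∑ s, T k s * A i j s

/-- Frobenius norm of a tensor. -/
noncomputable def frobNorm {n1 n2 n3 : ℕ} (A : Tensor n1 n2 n3) : ℝ :=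
  Real.sqrt (∑ i, ∑ j, ∑ k, ‖A i j k‖ ^ 2)

/-- Entrywise maximum modulus of a tensor. -/
noncomputable def infNorm {n1 n2 n3 : ℕ} (A : Tensor n1 n2 n3) : ℝ :=
  ⨆ i, ⨆ j, ⨆ k, ‖A i j k‖

/-- `‖A‖_{1↦2}`: largest Frobenius norm of a lateral slice (column). -/
noncomputable def norm1to2 {n1 n2 n3 : ℕ} (A : Tensor n1 n2 n3) : ℝ :=
  ⨆ j, Real.sqrt (∑ i, ∑ k, ‖A i j k‖ ^ 2)

/-- `‖A‖_{2↦∞}`: largest Frobenius norm of a horizontal slice (row). -/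
noncomputable def norm2toInf {n1 n2 n3 : ℕ} (A : Tensor n1 n2 n3) : ℝ :=
  ⨆ i, Real.sqrt (∑ j, ∑ k, ‖A i j k‖ ^ 2)

/-- `‖A‖_{∞,2}`. -/
noncomputable def normInf2 {n1 n2 n3 : ℕ} (A : Tensor n1 n2 n3) : ℝ :=
  max (norm1to2 A) (norm2toInf A)

/-- Singular values of a complex matrix: square roots of the eigenvalues of `Mᴴ * M`. -/
noncomputable def singVals {m n : ℕ} (M : Matrix (Fin m) (Fin n) ℂ) : Fin n → ℝ :=
  fun i => Real.sqrt ((Matrix.isHermitian_conjTranspose_mul_self M).eigenvalues i)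

/-- Matrix spectral norm: the largest singular value. -/
noncomputable def specNormMat {m n : ℕ} (M : Matrix (Fin m) (Fin n) ℂ) : ℝ :=
  ⨆ i, singVals M i

/-- Matrix nuclear norm: sum of the singular values. -/
noncomputable def nucNormMat {m n : ℕ} (M : Matrix (Fin m) (Fin n) ℂ) : ℝ :=
  ∑ i, singVals M i

/-- Tensor spectral norm: the maximum singular value over all frontal slices. -/
noncomputable def tSpecNorm {n1 n2 n3 : ℕ} (A : Tensor n1 n2 n3) : ℝ :=
  ⨆ k, specNormMat (slice A k)

/-- Tensor nuclear norm: the sum of all singular values of all frontal slices. -/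
noncomputable def tNucNorm {n1 n2 n3 : ℕ} (A : Tensor n1 n2 n3) : ℝ :=
  ∑ k, nucNormMat (slice A k)

/-- Smallest singular value. -/
noncomputable def sigmaMin {m n : ℕ} (M : Matrix (Fin m) (Fin n) ℂ) : ℝ :=
  ⨅ i, singVals M i

/-- Condition number `κ(T) = σ_max(T) / σ_min(T)`. -/
noncomputable def kappa {m n : ℕ} (M : Matrix (Fin m) (Fin n) ℂ) : ℝ :=
  specNormMat M / sigmaMin M

/-- Entrywise maximum modulus of a matrix. -/
noncomputable def matInfNorm {m n : ℕ} (M : Matrix (Fin m) (Fin n) ℂ) : ℝ :=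
  ⨆ i, ⨆ j, ‖M i j‖

/-- `‖M‖_{1↦2}`: largest `ℓ2` norm of the columns of `M`. -/
noncomputable def col2Norm {m n : ℕ} (M : Matrix (Fin m) (Fin n) ℂ) : ℝ :=
  ⨆ j, Real.sqrt (∑ i, ‖M i j‖ ^ 2)

/-- Moore–Penrose pseudo-inverse of a matrix of full column rank. -/
noncomputable def pinv {N3 n3 : ℕ} (T : Matrix (Fin N3) (Fin n3) ℂ) :
    Matrix (Fin n3) (Fin N3) ℂ :=
  (Tᴴ * T)⁻¹ * Tᴴ

/-- `ρ(T) = N3 · max(‖T‖_∞², ‖T†‖_∞²)`. -/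
noncomputable def rho {N3 n3 : ℕ} (T : Matrix (Fin N3) (Fin n3) ℂ) : ℝ :=
  (N3 : ℝ) * max (matInfNorm T ^ 2) (matInfNorm (pinv T) ^ 2)

/-- `T` has full column rank. -/
def FullColRank {N3 n3 : ℕ} (T : Matrix (Fin N3) (Fin n3) ℂ) : Prop := T.rank = n3

/-- The sampling operator `S_Ω`. -/
noncomputable def sampleOp {n1 n2 n3 : ℕ} (Ω : Finset (Fin n1 × Fin n2 × Fin n3)) (A : Tensor n1 n2 n3) :
    Tensor n1 n2 n3 :=
  fun i j k => if (i, j, k) ∈ Ω then A i j k else 0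

open Classical in
/-- The probability, under Bernoulli(p) sampling of each index independently, that the
random sampled index set satisfies the event `E`. -/
noncomputable def berProb {ι : Type*} [Fintype ι] (p : ℝ) (E : Finset ι → Prop) : ℝ :=
  ∑ Ω ∈ (Finset.univ : Finset ι).powerset,
    if E Ω then p ^ Ω.card * (1 - p) ^ (Fintype.card ι - Ω.card) else 0

/-- Skinny natural t-SVD of tubal rank `r`: `A = U ⋆ S ⋆ Vᴴ` with slice-wise orthonormal
columns for `U`, `V`, slice-wise diagonal `S` with nonnegative (real) diagonal entries,
and no zero tube on the diagonal of `S` (so `r` is exactly the tubal rank of `A`). -/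
structure IsSkinnyTSVD {n1 n2 n3 : ℕ} (A : Tensor n1 n2 n3) (r : ℕ)
    (U : Tensor n1 r n3) (S : Tensor r r n3) (V : Tensor n2 r n3) : Prop where
  factor : A = tprod U (tprod S (hconj V))
  U_orth : ∀ k : Fin n3, (slice U k)ᴴ * slice U k = 1
  V_orth : ∀ k : Fin n3, (slice V k)ᴴ * slice V k = 1
  S_diag : ∀ (k : Fin n3) (i j : Fin r), i ≠ j → S i j k = 0
  S_real_nonneg : ∀ (k : Fin n3) (i : Fin r), (S i i k).im = 0 ∧ 0 ≤ (S i i k).re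
  tubes_ne : ∀ i : Fin r, ∃ k : Fin n3, S i i k ≠ 0

/-- Full natural t-SVD: `A = U ⋆ S ⋆ Vᴴ` with slice-wise unitary `U`, `V` and slice-wise
diagonal `S` with nonnegative (real) diagonal entries. -/
structure IsFullTSVD {n1 n2 n3 : ℕ} (A : Tensor n1 n2 n3)
    (U : Tensor n1 n1 n3) (S : Tensor n1 n2 n3) (V : Tensor n2 n2 n3) : Prop where
  factor : A = tprod U (tprod S (hconj V))
  U_unitary : ∀ k : Fin n3, (slice U k)ᴴ * slice U k = 1
  V_unitary : ∀ k : Fin n3, (slice V k)ᴴ * slice V k = 1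
  S_diag : ∀ (k : Fin n3) (i : Fin n1) (j : Fin n2), (i : ℕ) ≠ (j : ℕ) → S i j k = 0
  S_real_nonneg : ∀ (k : Fin n3) (i : Fin n1) (j : Fin n2), (i : ℕ) = (j : ℕ) →
    (S i j k).im = 0 ∧ 0 ≤ (S i j k).re

/-- `(S - τ)₊`: replace every diagonal entry `s` of each frontal slice by `max (s - τ) 0`. -/
noncomputable def shrink {n1 n2 n3 : ℕ} (τ : ℝ) (S : Tensor n1 n2 n3) : Tensor n1 n2 n3 :=
  fun i j k => if (i : ℕ) = (j : ℕ) then ((max ((S i j k).re - τ) 0 : ℝ) : ℂ) else S i j k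

/-- The projection `P_S` onto the tangent subspace spanned by the singular tensors. -/
noncomputable def PS {n1 n2 n3 r : ℕ} (U : Tensor n1 r n3) (V : Tensor n2 r n3) (Z : Tensor n1 n2 n3) :
    Tensor n1 n2 n3 :=
  tprod U (tprod (hconj U) Z) + tprod Z (tprod V (hconj V))
    - tprod U (tprod (hconj U) (tprod Z (tprod V (hconj V))))

/-- The complementary projection `P_{S⊥}`. -/
noncomputable def PSperp {n1 n2 n3 r : ℕ} (U : Tensor n1 r n3) (V : Tensor n2 r n3) (Z : Tensor n1 n2 n3) :
    Tensor n1 n2 n3 :=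
  Z - PS U V Z

/-- Operator norm of a map between tensor spaces, with respect to Frobenius norms. -/
noncomputable def opNormT {a b c d e f : ℕ} (L : Tensor a b c → Tensor d e f) : ℝ :=
  sSup {x : ℝ | ∃ Z : Tensor a b c, frobNorm Z ≤ 1 ∧ x = frobNorm (L Z)}

/-- Tensor column basis `ξ_i ∈ ℂ^{n×1×m}`. -/
noncomputable def xiB (n m : ℕ) (i : Fin n) : Tensor n 1 m := fun a _ _ => if a = i then 1 else 0

/-- Tensor frontal-slice basis `ζ_k ∈ ℂ^{1×1×n}`. -/
noncomputable def zetaB (n : ℕ) (k : Fin n) : Tensor 1 1 n := fun _ _ c => if c = k then 1 else 0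

/-- Standard inner product of tensors. -/
noncomputable def tinner {n1 n2 n3 : ℕ} (A B : Tensor n1 n2 n3) : ℂ :=
  ∑ i, ∑ j, ∑ k, (starRingEnd ℂ) (A i j k) * B i j k

/-- Standard basis tensor `e_{ijk}`. -/
noncomputable def eBasis (n1 n2 n3 : ℕ) (i : Fin n1) (j : Fin n2) (k : Fin n3) : Tensor n1 n2 n3 :=
  fun a b c => if a = i ∧ b = j ∧ c = k then 1 else 0

/-- `X` is the unique optimal solution of:
minimize `‖T(X̂)‖_*` subject to `S_Ω(X̂) = S_Ω(X)`. -/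
def UniqueSolution {n1 n2 n3 N3 : ℕ} (T : Matrix (Fin N3) (Fin n3) ℂ) (X : Tensor n1 n2 n3)
    (Ω : Finset (Fin n1 × Fin n2 × Fin n3)) : Prop :=
  ∀ Y : Tensor n1 n2 n3, sampleOp Ω Y = sampleOp Ω X → Y ≠ X →
    tNucNorm (mode3 T X) < tNucNorm (mode3 T Y)

/-- The tensor incoherence conditions with parameters `μ, ν`. -/
structure Incoherent {n1 n2 n3 N3 r : ℕ} (T : Matrix (Fin N3) (Fin n3) ℂ)
    (U : Tensor n1 r N3) (V : Tensor n2 r N3) (μ ν : ℝ) : Prop where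
  hU : ∀ i : Fin n1,
    frobNorm (tprod (hconj U) (xiB n1 N3 i)) ≤ Real.sqrt (μ * r * N3 / n1)
  hV : ∀ j : Fin n2,
    frobNorm (tprod (hconj V) (xiB n2 N3 j)) ≤ Real.sqrt (μ * r * N3 / n2)
  hUT : ∀ (i : Fin n1) (k : Fin n3),
    frobNorm (tprod (tprod (hconj U) (xiB n1 N3 i)) (mode3 T (zetaB n3 k)))
      ≤ Real.sqrt (ν * r / n1) * col2Norm T
  hVT : ∀ (j : Fin n2) (k : Fin n3),
    frobNorm (tprod (tprod (hconj V) (xiB n2 N3 j)) (mode3 T (zetaB n3 k)))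
      ≤ Real.sqrt (ν * r / n2) * col2Norm T

/-- The operator `P_S T R_Ω T† P_S − P_S T T† P_S` on `ℂ^{n1×n2×N3}`, `R_Ω = p⁻¹ S_Ω`. -/
noncomputable def isoOp {n1 n2 n3 N3 r : ℕ} (T : Matrix (Fin N3) (Fin n3) ℂ)
    (U : Tensor n1 r N3) (V : Tensor n2 r N3)
    (Ω : Finset (Fin n1 × Fin n2 × Fin n3)) (p : ℝ) :
    Tensor n1 n2 N3 → Tensor n1 n2 N3 :=
  fun Z =>
    PS U V (mode3 T ((p⁻¹ : ℝ) • sampleOp Ω (mode3 (pinv T) (PS U V Z))))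
      - PS U V (mode3 T (mode3 (pinv T) (PS U V Z)))

/-- The dual-certificate conditions (a) `(T T† − T S_Ω T†)ᴴ Y = 0` (the adjoint being
`T̃ Tᴴ − T̃ S_Ω Tᴴ` with `T̃ = (T†)ᴴ`), (b) `‖P_S(Y) − U ⋆ Vᴴ‖_F ≤ p/(8 κ(T))`, and
(c) `‖P_{S⊥}(Y)‖ ≤ 1/2` in tensor spectral norm. -/
def DualCert {n1 n2 n3 N3 r : ℕ} (T : Matrix (Fin N3) (Fin n3) ℂ)
    (U : Tensor n1 r N3) (V : Tensor n2 r N3)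
    (Ω : Finset (Fin n1 × Fin n2 × Fin n3)) (p : ℝ) (Y : Tensor n1 n2 N3) : Prop :=
  (mode3 (pinv T)ᴴ (mode3 Tᴴ Y) - mode3 (pinv T)ᴴ (sampleOp Ω (mode3 Tᴴ Y)) = 0) ∧
  frobNorm (PS U V Y - tprod U (hconj V)) ≤ p / (8 * kappa T) ∧
  tSpecNorm (PSperp U V Y) ≤ 1 / 2

section AuxBasic

variable {n1 n2 n3 l a b c d : ℕ}

/-- sum of squared entries -/
noncomputable def tNS {n1 n2 n3 : ℕ} (A : Tensor n1 n2 n3) : ℝ := ∑ i, ∑ j, ∑ k, ‖A i j k‖ ^ 2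

lemma frobNorm_eq_sqrt (A : Tensor n1 n2 n3) : frobNorm A = Real.sqrt (tNS A) := rfl

lemma tNS_nonneg (A : Tensor n1 n2 n3) : 0 ≤ tNS A :=
  Finset.sum_nonneg fun _ _ => Finset.sum_nonneg fun _ _ => Finset.sum_nonneg fun _ _ => sq_nonneg _

lemma frobNorm_nonneg (A : Tensor n1 n2 n3) : 0 ≤ frobNorm A := Real.sqrt_nonneg _

/-- embed tensors into a Euclidean space -/
noncomputable def toE {n1 n2 n3 : ℕ} (A : Tensor n1 n2 n3) :
    EuclideanSpace ℂ (Fin n1 × Fin n2 × Fin n3) :=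
  (WithLp.equiv 2 _).symm (fun x => A x.1 x.2.1 x.2.2)

lemma toE_apply (A : Tensor n1 n2 n3) (x : Fin n1 × Fin n2 × Fin n3) :
    toE A x = A x.1 x.2.1 x.2.2 := rfl

lemma toE_add (A B : Tensor n1 n2 n3) : toE (A + B) = toE A + toE B := rfl

lemma toE_sub (A B : Tensor n1 n2 n3) : toE (A - B) = toE A - toE B := rfl

lemma toE_smul (t : ℝ) (A : Tensor n1 n2 n3) : toE (t • A) = t • toE A := rfl

lemma toE_zero : toE (0 : Tensor n1 n2 n3) = 0 := rfl

lemma norm_toE (A : Tensor n1 n2 n3) : ‖toE A‖ = frobNorm A := by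
  rw [EuclideanSpace.norm_eq, frobNorm]
  congr 1
  rw [Fintype.sum_prod_type]
  exact Finset.sum_congr rfl fun i _ => by rw [Fintype.sum_prod_type]; rfl

lemma frobNorm_add_le (A B : Tensor n1 n2 n3) : frobNorm (A + B) ≤ frobNorm A + frobNorm B := by
  rw [← norm_toE, ← norm_toE, ← norm_toE, toE_add]; exact norm_add_le _ _

lemma frobNorm_sub_le (A B : Tensor n1 n2 n3) : frobNorm (A - B) ≤ frobNorm A + frobNorm B := by
  rw [← norm_toE, ← norm_toE, ← norm_toE, toE_sub]; exact norm_sub_le _ _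

lemma frobNorm_smul (t : ℝ) (A : Tensor n1 n2 n3) : frobNorm (t • A) = |t| * frobNorm A := by
  rw [← norm_toE, ← norm_toE, toE_smul, norm_smul, Real.norm_eq_abs]

lemma frobNorm_zero : frobNorm (0 : Tensor n1 n2 n3) = 0 := by
  rw [← norm_toE, toE_zero, norm_zero]

lemma eq_zero_of_frobNorm_nonpos {A : Tensor n1 n2 n3} (h : frobNorm A ≤ 0) : A = 0 := by
  rw [← norm_toE] at h
  have h2 : toE A = 0 := norm_le_zero_iff.mp h
  funext i j k
  have h3 := congrArg (fun v : EuclideanSpace ℂ (Fin n1 × Fin n2 × Fin n3) => v (i, j, k)) h2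
  simpa [toE_apply] using h3

lemma tinner_toE (A B : Tensor n1 n2 n3) : tinner A B = inner ℂ (toE A) (toE B) := by
  rw [tinner]
  rw [show (inner ℂ (toE A) (toE B) : ℂ) = ∑ x, (starRingEnd ℂ) (toE A x) * toE B x from by
    rw [PiLp.inner_apply]; exact Finset.sum_congr rfl fun x _ => by rw [RCLike.inner_apply]; ring]
  rw [Fintype.sum_prod_type]
  exact Finset.sum_congr rfl fun i _ => by rw [Fintype.sum_prod_type]; rfl

lemma sum_swap3 {M : Type*} [AddCommMonoid M] {a b c : ℕ} (f : Fin a → Fin b → Fin c → M) :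
    ∑ i, ∑ j, ∑ k, f i j k = ∑ k, ∑ j, ∑ i, f i j k := by
  calc ∑ i, ∑ j, ∑ k, f i j k
      = ∑ i, ∑ k, ∑ j, f i j k := Finset.sum_congr rfl fun i _ => Finset.sum_comm
    _ = ∑ k, ∑ i, ∑ j, f i j k := Finset.sum_comm
    _ = ∑ k, ∑ j, ∑ i, f i j k := Finset.sum_congr rfl fun k _ => Finset.sum_comm

lemma sum_swap4 {M : Type*} [AddCommMonoid M] {a b c d : ℕ} (f : Fin a → Fin b → Fin c → Fin d → M) :
    ∑ i, ∑ j, ∑ k, ∑ s, f i j k s = ∑ s, ∑ j, ∑ k, ∑ i, f i j k s := by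
  calc ∑ i, ∑ j, ∑ k, ∑ s, f i j k s
      = ∑ i, ∑ j, ∑ s, ∑ k, f i j k s :=
        Finset.sum_congr rfl fun i _ => Finset.sum_congr rfl fun j _ => Finset.sum_comm
    _ = ∑ i, ∑ s, ∑ j, ∑ k, f i j k s := Finset.sum_congr rfl fun i _ => Finset.sum_comm
    _ = ∑ s, ∑ i, ∑ j, ∑ k, f i j k s := Finset.sum_comm
    _ = ∑ s, ∑ j, ∑ i, ∑ k, f i j k s := Finset.sum_congr rfl fun s _ => Finset.sum_comm
    _ = ∑ s, ∑ j, ∑ k, ∑ i, f i j k s :=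
        Finset.sum_congr rfl fun s _ => Finset.sum_congr rfl fun j _ => Finset.sum_comm

lemma tprod_assoc (A : Tensor a b n3) (B : Tensor b c n3) (C : Tensor c d n3) :
    tprod (tprod A B) C = tprod A (tprod B C) := by
  funext i j k
  simp only [tprod, Finset.sum_mul, Finset.mul_sum]
  rw [Finset.sum_comm]
  exact Finset.sum_congr rfl fun t _ => Finset.sum_congr rfl fun s _ => by ring

lemma tprod_sub_right (A : Tensor a b n3) (X Y : Tensor b c n3) :
    tprod A (X - Y) = tprod A X - tprod A Y := by
  funext i j k
  simp [tprod, mul_sub, Finset.sum_sub_distrib]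

lemma tprod_sub_left (X Y : Tensor a b n3) (A : Tensor b c n3) :
    tprod (X - Y) A = tprod X A - tprod Y A := by
  funext i j k
  simp [tprod, sub_mul, Finset.sum_sub_distrib]

lemma tprod_add_right (A : Tensor a b n3) (X Y : Tensor b c n3) :
    tprod A (X + Y) = tprod A X + tprod A Y := by
  funext i j k
  simp [tprod, mul_add, Finset.sum_add_distrib]

lemma tprod_add_left (X Y : Tensor a b n3) (A : Tensor b c n3) :
    tprod (X + Y) A = tprod X A + tprod Y A := by
  funext i j k
  simp [tprod, add_mul, Finset.sum_add_distrib]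

lemma tprod_neg_right (A : Tensor a b n3) (X : Tensor b c n3) :
    tprod A (-X) = -tprod A X := by
  funext i j k
  simp [tprod]

lemma tprod_neg_left (X : Tensor a b n3) (A : Tensor b c n3) :
    tprod (-X) A = -tprod X A := by
  funext i j k
  simp [tprod]

lemma tprod_smul_right (t : ℝ) (A : Tensor a b n3) (X : Tensor b c n3) :
    tprod A (t • X) = t • tprod A X := by
  funext i j k
  simp only [tprod, Pi.smul_apply, Finset.smul_sum]
  exact Finset.sum_congr rfl fun s _ => by
    simp [Complex.real_smul]; ring

lemma tprod_smul_left (t : ℝ) (X : Tensor a b n3) (A : Tensor b c n3) :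
    tprod (t • X) A = t • tprod X A := by
  funext i j k
  simp only [tprod, Pi.smul_apply, Finset.smul_sum]
  exact Finset.sum_congr rfl fun s _ => by
    simp [Complex.real_smul]; ring

lemma hconj_hconj (A : Tensor a b n3) : hconj (hconj A) = A := by
  funext i j k; simp [hconj]

lemma hconj_tprod (A : Tensor a b n3) (B : Tensor b c n3) :
    hconj (tprod A B) = tprod (hconj B) (hconj A) := by
  funext i j k
  simp only [hconj, tprod, map_sum, _root_.map_mul]
  exact Finset.sum_congr rfl fun s _ => by ring

lemma tinner_tprod_left (P : Tensor a b n3) (X : Tensor b c n3) (Y : Tensor a c n3) :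
    tinner (tprod P X) Y = tinner X (tprod (hconj P) Y) := by
  simp only [tinner, tprod, hconj, map_sum, _root_.map_mul, Finset.sum_mul, Finset.mul_sum]
  rw [sum_swap4]
  exact Finset.sum_congr rfl fun s _ => Finset.sum_congr rfl fun j _ =>
    Finset.sum_congr rfl fun k _ => Finset.sum_congr rfl fun i _ => by ring

lemma tinner_tprod_right (X : Tensor a b n3) (Q : Tensor b c n3) (Y : Tensor a c n3) :
    tinner (tprod X Q) Y = tinner X (tprod Y (hconj Q)) := by
  simp only [tinner, tprod, hconj, map_sum, _root_.map_mul, Finset.sum_mul, Finset.mul_sum]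
  refine Finset.sum_congr rfl fun i _ => ?_
  rw [sum_swap3]
  exact Finset.sum_congr rfl fun s _ => Finset.sum_congr rfl fun j _ =>
    Finset.sum_congr rfl fun k _ => by ring

lemma tinner_zero_right (X : Tensor a b n3) : tinner X (0 : Tensor a b n3) = 0 := by
  simp [tinner]

lemma tinner_add_left (X Y D : Tensor a b n3) :
    tinner (X + Y) D = tinner X D + tinner Y D := by
  simp [tinner, add_mul, Finset.sum_add_distrib]

lemma tinner_sub_left (X Y D : Tensor a b n3) :
    tinner (X - Y) D = tinner X D - tinner Y D := by
  simp [tinner, sub_mul, Finset.sum_sub_distrib]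

end AuxBasic




section AuxPS

variable {n1 n2 n3 r : ℕ}

/-- identity tensor -/
noncomputable def idT (r n3 : ℕ) : Tensor r r n3 := fun i j _ => if i = j then 1 else 0

lemma tprod_idT (X : Tensor r n2 n3) : tprod (idT r n3) X = X := by
  funext i j k
  simp [tprod, idT, ite_mul]

lemma orth_idT {U : Tensor n1 r n3} (hU : ∀ k : Fin n3, (slice U k)ᴴ * slice U k = 1) :
    tprod (hconj U) U = idT r n3 := by
  funext i j k
  have h := congrFun (congrFun (congrArg (fun M => (M : Matrix (Fin r) (Fin r) ℂ)) (hU k)) i) j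
  simpa [Matrix.mul_apply, Matrix.conjTranspose_apply, slice, tprod, hconj, Matrix.one_apply,
    idT] using h

lemma PS_eq (U : Tensor n1 r n3) (V : Tensor n2 r n3) (Z : Tensor n1 n2 n3) :
    PS U V Z = tprod (tprod U (hconj U)) Z + tprod Z (tprod V (hconj V))
      - tprod (tprod U (hconj U)) (tprod Z (tprod V (hconj V))) := by
  rw [PS, tprod_assoc, tprod_assoc]

lemma proj_sq_left {U : Tensor n1 r n3} (hU : ∀ k : Fin n3, (slice U k)ᴴ * slice U k = 1) :
    tprod (tprod U (hconj U)) (tprod U (hconj U)) = tprod U (hconj U) := by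
  rw [tprod_assoc, ← tprod_assoc (hconj U) U (hconj U), orth_idT hU, tprod_idT]

lemma hconj_proj (U : Tensor n1 r n3) :
    hconj (tprod U (hconj U)) = tprod U (hconj U) := by
  rw [hconj_tprod, hconj_hconj]

lemma tinner_PS_perp {U : Tensor n1 r n3} {V : Tensor n2 r n3}
    (hU : ∀ k : Fin n3, (slice U k)ᴴ * slice U k = 1)
    (hV : ∀ k : Fin n3, (slice V k)ᴴ * slice V k = 1)
    (Z : Tensor n1 n2 n3) :
    tinner (PS U V Z) (PSperp U V Z) = 0 := by
  set P1 : Tensor n1 n1 n3 := tprod U (hconj U) with hP1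
  set Q1 : Tensor n2 n2 n3 := tprod V (hconj V) with hQ1
  have hPP : tprod P1 P1 = P1 := proj_sq_left hU
  have hQQ : tprod Q1 Q1 = Q1 := proj_sq_left hV
  have hPSe : PS U V Z = tprod P1 Z + tprod Z Q1 - tprod P1 (tprod Z Q1) := PS_eq U V Z
  have hprojP : ∀ W : Tensor n1 n2 n3, tprod P1 (tprod P1 W) = tprod P1 W := fun W => by
    rw [← tprod_assoc, hPP]
  have hprojQ : ∀ W : Tensor n1 n2 n3, tprod (tprod W Q1) Q1 = tprod W Q1 := fun W => by
    rw [tprod_assoc, hQQ]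
  set D : Tensor n1 n2 n3 := PSperp U V Z with hD
  have hPD : tprod P1 D = 0 := by
    rw [hD, PSperp, hPSe, tprod_sub_right, tprod_sub_right, tprod_add_right,
      hprojP Z, hprojP (tprod Z Q1)]
    abel
  have hDQ : tprod D Q1 = 0 := by
    rw [hD, PSperp, hPSe, tprod_sub_left, tprod_sub_left, tprod_add_left,
      tprod_assoc P1 Z Q1, hprojQ Z, tprod_assoc P1 (tprod Z Q1) Q1, hprojQ Z]
    abel
  rw [hPSe, tinner_sub_left, tinner_add_left]
  rw [tinner_tprod_left P1 Z D, hconj_proj, ← hP1, hPD, tinner_zero_right]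
  rw [tinner_tprod_right Z Q1 D, hconj_proj, ← hQ1, hDQ, tinner_zero_right]
  rw [tinner_tprod_left P1 (tprod Z Q1) D, hconj_proj, ← hP1, hPD, tinner_zero_right]
  ring

lemma frobNorm_PS_le {U : Tensor n1 r n3} {V : Tensor n2 r n3}
    (hU : ∀ k : Fin n3, (slice U k)ᴴ * slice U k = 1)
    (hV : ∀ k : Fin n3, (slice V k)ᴴ * slice V k = 1)
    (Z : Tensor n1 n2 n3) :
    frobNorm (PS U V Z) ≤ frobNorm Z := by
  have hsum : PS U V Z + PSperp U V Z = Z := by rw [PSperp]; abel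
  have horth : (inner ℂ (toE (PS U V Z)) (toE (PSperp U V Z)) : ℂ) = 0 := by
    rw [← tinner_toE]; exact tinner_PS_perp hU hV Z
  have hZe : toE Z = toE (PS U V Z) + toE (PSperp U V Z) := by rw [← toE_add, hsum]
  have hns : ‖toE Z‖ ^ 2 = ‖toE (PS U V Z)‖ ^ 2 + ‖toE (PSperp U V Z)‖ ^ 2 := by
    rw [hZe, norm_add_sq (𝕜 := ℂ), horth]
    simp
  rw [← norm_toE, ← norm_toE]
  nlinarith [norm_nonneg (toE Z), norm_nonneg (toE (PS U V Z)),
    norm_nonneg (toE (PSperp U V Z)), sq_nonneg (‖toE (PSperp U V Z)‖)]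

end AuxPS











section AuxVec
open scoped ComplexOrder

variable {m n N3 n3 : ℕ}

noncomputable def vns {n : ℕ} (v : Fin n → ℂ) : ℝ := ∑ i, ‖v i‖ ^ 2

lemma vns_nonneg (v : Fin n → ℂ) : 0 ≤ vns v :=
  Finset.sum_nonneg fun _ _ => sq_nonneg _

lemma conj_mul_self (z : ℂ) : (starRingEnd ℂ) z * z = ((‖z‖ ^ 2 : ℝ) : ℂ) := by
  rw [mul_comm, Complex.mul_conj, Complex.normSq_eq_norm_sq]

lemma star_dot_self (v : Fin n → ℂ) : star v ⬝ᵥ v = ((vns v : ℝ) : ℂ) := by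
  simp only [dotProduct, Pi.star_apply, vns, Complex.ofReal_sum]
  exact Finset.sum_congr rfl fun i _ => conj_mul_self (v i)

lemma quad_eq (T : Matrix (Fin m) (Fin n) ℂ) (v : Fin n → ℂ) :
    star v ⬝ᵥ ((Tᴴ * T) *ᵥ v) = ((vns (T *ᵥ v) : ℝ) : ℂ) := by
  rw [← Matrix.mulVec_mulVec, Matrix.dotProduct_mulVec, ← Matrix.star_mulVec, star_dot_self]

lemma vns_unitary (Q : Matrix (Fin n) (Fin n) ℂ) (hQ : Q * star Q = 1) (v : Fin n → ℂ) :
    vns (star Q *ᵥ v) = vns v := by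
  have h : ((vns (star Q *ᵥ v) : ℝ) : ℂ) = ((vns v : ℝ) : ℂ) := by
    rw [← star_dot_self, ← star_dot_self]
    rw [Matrix.star_mulVec, Matrix.star_eq_conjTranspose, Matrix.conjTranspose_conjTranspose,
      Matrix.dotProduct_mulVec, Matrix.vecMul_vecMul]
    rw [← Matrix.star_eq_conjTranspose, hQ]
    simp [Matrix.vecMul_one]
  exact_mod_cast h

lemma quad_repr (A : Matrix (Fin n) (Fin n) ℂ) (hA : A.IsHermitian) (v : Fin n → ℂ) :
    star v ⬝ᵥ (A *ᵥ v)
      = ∑ i, ((hA.eigenvalues i : ℝ) : ℂ)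
          * ((‖(star (hA.eigenvectorUnitary : Matrix (Fin n) (Fin n) ℂ) *ᵥ v) i‖ ^ 2 : ℝ) : ℂ) := by
  set Q : Matrix (Fin n) (Fin n) ℂ := (hA.eigenvectorUnitary : Matrix (Fin n) (Fin n) ℂ) with hQdef
  set w : Fin n → ℂ := star Q *ᵥ v with hw
  have hsw : star w = star v ᵥ* Q := by
    rw [hw, Matrix.star_mulVec, Matrix.star_eq_conjTranspose, Matrix.conjTranspose_conjTranspose]
  conv_lhs => rw [hA.spectral_theorem, Unitary.conjStarAlgAut_apply]
  rw [← Matrix.mulVec_mulVec, ← Matrix.mulVec_mulVec, Matrix.dotProduct_mulVec, ← hsw]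
  rw [show Matrix.diagonal (RCLike.ofReal ∘ hA.eigenvalues) *ᵥ w
    = fun i => ((hA.eigenvalues i : ℝ) : ℂ) * w i from funext fun i => Matrix.mulVec_diagonal _ _ i]
  simp only [dotProduct, Pi.star_apply]
  refine Finset.sum_congr rfl fun i _ => ?_
  rw [Complex.star_def]
  rw [show (starRingEnd ℂ) (w i) * (((hA.eigenvalues i : ℝ) : ℂ) * w i)
      = ((hA.eigenvalues i : ℝ) : ℂ) * ((starRingEnd ℂ) (w i) * w i) from by ring]
  rw [conj_mul_self]

lemma singVals_nonneg (T : Matrix (Fin m) (Fin n) ℂ) (i : Fin n) : 0 ≤ singVals T i :=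
  Real.sqrt_nonneg _

lemma eig_nonneg (T : Matrix (Fin m) (Fin n) ℂ) (i : Fin n) :
    0 ≤ (Matrix.isHermitian_conjTranspose_mul_self T).eigenvalues i := by
  open scoped ComplexOrder in
  exact (Matrix.posSemidef_conjTranspose_mul_self T).eigenvalues_nonneg i

lemma eig_eq_sq_singVals (T : Matrix (Fin m) (Fin n) ℂ) (i : Fin n) :
    (Matrix.isHermitian_conjTranspose_mul_self T).eigenvalues i = singVals T i ^ 2 :=
  (Real.sq_sqrt (eig_nonneg T i)).symm

lemma specNormMat_nonneg (T : Matrix (Fin m) (Fin n) ℂ) : 0 ≤ specNormMat T :=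
  Real.iSup_nonneg (singVals_nonneg T)

lemma sigmaMin_nonneg (T : Matrix (Fin m) (Fin n) ℂ) : 0 ≤ sigmaMin T :=
  Real.iInf_nonneg (singVals_nonneg T)

lemma singVals_le_spec (T : Matrix (Fin m) (Fin n) ℂ) (i : Fin n) :
    singVals T i ≤ specNormMat T :=
  le_ciSup (Set.Finite.bddAbove (Set.finite_range _)) i

lemma sigmaMin_le_singVals (T : Matrix (Fin m) (Fin n) ℂ) (i : Fin n) :
    sigmaMin T ≤ singVals T i :=
  ciInf_le (Set.Finite.bddBelow (Set.finite_range _)) i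

lemma vns_mulVec_le (T : Matrix (Fin m) (Fin n) ℂ) (v : Fin n → ℂ) :
    vns (T *ᵥ v) ≤ specNormMat T ^ 2 * vns v := by
  have hA := Matrix.isHermitian_conjTranspose_mul_self T
  have h1 : ((vns (T *ᵥ v) : ℝ) : ℂ)
      = ∑ i, ((hA.eigenvalues i : ℝ) : ℂ)
          * ((‖(star (hA.eigenvectorUnitary : Matrix (Fin n) (Fin n) ℂ) *ᵥ v) i‖ ^ 2 : ℝ) : ℂ) := by
    rw [← quad_eq, quad_repr _ hA]
  set w := star (hA.eigenvectorUnitary : Matrix (Fin n) (Fin n) ℂ) *ᵥ v with hwdef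
  have h2 : vns (T *ᵥ v) = ∑ i, hA.eigenvalues i * ‖w i‖ ^ 2 := by
    have := h1
    push_cast at this
    exact_mod_cast this
  have h3 : vns w = vns v :=
    vns_unitary _ (Matrix.mem_unitaryGroup_iff.mp (hA.eigenvectorUnitary).2) v
  rw [h2, ← h3]
  rw [vns, Finset.mul_sum]
  refine Finset.sum_le_sum fun i _ => ?_
  have he : hA.eigenvalues i ≤ specNormMat T ^ 2 := by
    rw [eig_eq_sq_singVals]
    exact pow_le_pow_left₀ (singVals_nonneg T i) (singVals_le_spec T i) 2
  exact mul_le_mul_of_nonneg_right he (sq_nonneg _)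

lemma vns_mulVec_ge (T : Matrix (Fin m) (Fin n) ℂ) (v : Fin n → ℂ) :
    sigmaMin T ^ 2 * vns v ≤ vns (T *ᵥ v) := by
  have hA := Matrix.isHermitian_conjTranspose_mul_self T
  have h1 : ((vns (T *ᵥ v) : ℝ) : ℂ)
      = ∑ i, ((hA.eigenvalues i : ℝ) : ℂ)
          * ((‖(star (hA.eigenvectorUnitary : Matrix (Fin n) (Fin n) ℂ) *ᵥ v) i‖ ^ 2 : ℝ) : ℂ) := by
    rw [← quad_eq, quad_repr _ hA]
  set w := star (hA.eigenvectorUnitary : Matrix (Fin n) (Fin n) ℂ) *ᵥ v with hwdef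
  have h2 : vns (T *ᵥ v) = ∑ i, hA.eigenvalues i * ‖w i‖ ^ 2 := by
    have := h1
    push_cast at this
    exact_mod_cast this
  have h3 : vns w = vns v :=
    vns_unitary _ (Matrix.mem_unitaryGroup_iff.mp (hA.eigenvectorUnitary).2) v
  rw [h2, ← h3]
  rw [vns, Finset.mul_sum]
  refine Finset.sum_le_sum fun i _ => ?_
  have he : sigmaMin T ^ 2 ≤ hA.eigenvalues i := by
    rw [eig_eq_sq_singVals]
    exact pow_le_pow_left₀ (sigmaMin_nonneg T) (sigmaMin_le_singVals T i) 2
  exact mul_le_mul_of_nonneg_right he (sq_nonneg _)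

end AuxVec

section AuxPinv
open scoped ComplexOrder

variable {m n N3 n3 n1 n2 : ℕ}

lemma eig_ne_zero {T : Matrix (Fin N3) (Fin n3) ℂ} (hT : FullColRank T) (i : Fin n3) :
    (Matrix.isHermitian_conjTranspose_mul_self T).eigenvalues i ≠ 0 := by
  classical
  have hrank : (Tᴴ * T).rank = n3 := by rw [Matrix.rank_conjTranspose_mul_self]; exact hT
  have h2 := (Matrix.isHermitian_conjTranspose_mul_self T).rank_eq_card_non_zero_eigs
  rw [hrank] at h2
  intro h0
  have hlt : Fintype.card {j // (Matrix.isHermitian_conjTranspose_mul_self T).eigenvalues j ≠ 0}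
      < Fintype.card (Fin n3) := Fintype.card_subtype_lt (x := i) (by simp [h0])
  rw [Fintype.card_fin, ← h2] at hlt
  exact lt_irrefl _ hlt

lemma singVals_pos {T : Matrix (Fin N3) (Fin n3) ℂ} (hT : FullColRank T) (i : Fin n3) :
    0 < singVals T i :=
  Real.sqrt_pos.mpr (lt_of_le_of_ne (eig_nonneg T i) (Ne.symm (eig_ne_zero hT i)))

lemma sigmaMin_pos {T : Matrix (Fin N3) (Fin n3) ℂ} (hT : FullColRank T) (hn : 0 < n3) :
    0 < sigmaMin T := by
  haveI : Nonempty (Fin n3) := ⟨⟨0, hn⟩⟩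
  obtain ⟨i, hi⟩ := exists_eq_ciInf_of_finite (f := singVals T)
  rw [sigmaMin, ← hi]
  exact singVals_pos hT i

lemma sigmaMin_le_spec {T : Matrix (Fin N3) (Fin n3) ℂ} (hn : 0 < n3) :
    sigmaMin T ≤ specNormMat T := by
  haveI : Nonempty (Fin n3) := ⟨⟨0, hn⟩⟩
  exact le_trans (sigmaMin_le_singVals T ⟨0, hn⟩) (singVals_le_spec T ⟨0, hn⟩)

lemma kappa_pos {T : Matrix (Fin N3) (Fin n3) ℂ} (hT : FullColRank T) (hn : 0 < n3) :
    0 < kappa T :=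
  div_pos (lt_of_lt_of_le (sigmaMin_pos hT hn) (sigmaMin_le_spec hn)) (sigmaMin_pos hT hn)

lemma one_le_kappa {T : Matrix (Fin N3) (Fin n3) ℂ} (hT : FullColRank T) (hn : 0 < n3) :
    1 ≤ kappa T :=
  (one_le_div (sigmaMin_pos hT hn)).mpr (sigmaMin_le_spec hn)

lemma det_unit {T : Matrix (Fin N3) (Fin n3) ℂ} (hT : FullColRank T) :
    IsUnit (Tᴴ * T).det := by
  rw [(Matrix.isHermitian_conjTranspose_mul_self T).det_eq_prod_eigenvalues]
  rw [isUnit_iff_ne_zero]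
  rw [Finset.prod_ne_zero_iff]
  intro i _
  exact Complex.ofReal_ne_zero.mpr (eig_ne_zero hT i)

lemma pinv_mul {T : Matrix (Fin N3) (Fin n3) ℂ} (hT : FullColRank T) :
    pinv T * T = 1 := by
  rw [pinv, Matrix.mul_assoc]
  exact Matrix.nonsing_inv_mul _ (det_unit hT)

lemma proj_herm (T : Matrix (Fin N3) (Fin n3) ℂ) :
    (T * pinv T)ᴴ = T * pinv T := by
  simp [pinv, Matrix.conjTranspose_mul, Matrix.conjTranspose_nonsing_inv,
    Matrix.conjTranspose_conjTranspose, Matrix.mul_assoc]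

lemma proj_idem {T : Matrix (Fin N3) (Fin n3) ℂ} (hT : FullColRank T) :
    (T * pinv T) * (T * pinv T) = T * pinv T := by
  rw [Matrix.mul_assoc T (pinv T) (T * pinv T), ← Matrix.mul_assoc (pinv T) T (pinv T),
    pinv_mul hT, Matrix.one_mul]

lemma vns_add (x y : Fin n → ℂ) :
    vns (x + y) = vns x + vns y + 2 * (star x ⬝ᵥ y).re := by
  simp only [vns, dotProduct, Pi.add_apply, Pi.star_apply, Complex.star_def]
  rw [Complex.re_sum, ← Finset.sum_add_distrib, Finset.mul_sum, ← Finset.sum_add_distrib]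
  refine Finset.sum_congr rfl fun i _ => ?_
  have h1 : ∀ z : ℂ, ‖z‖ ^ 2 = Complex.normSq z := fun z => by
    rw [Complex.normSq_eq_norm_sq]
  rw [h1, h1, h1, Complex.normSq_add]
  have h2 : (x i * (starRingEnd ℂ) (y i)).re = ((starRingEnd ℂ) (x i) * y i).re := by
    rw [show (starRingEnd ℂ) (x i) * y i = (starRingEnd ℂ) (x i * (starRingEnd ℂ) (y i)) from by
      rw [_root_.map_mul, Complex.conj_conj]]
    exact (Complex.conj_re _).symm
  rw [h2]
  try ring

lemma vns_proj_le {T : Matrix (Fin N3) (Fin n3) ℂ} (hT : FullColRank T) (b : Fin N3 → ℂ) :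
    vns ((T * pinv T) *ᵥ b) ≤ vns b := by
  set P := T * pinv T with hP
  have hcross : star (P *ᵥ b) ⬝ᵥ (b - P *ᵥ b) = 0 := by
    rw [Matrix.star_mulVec, proj_herm, dotProduct_sub]
    rw [Matrix.dotProduct_mulVec, Matrix.vecMul_vecMul, ← hP, proj_idem hT]
    exact sub_self _
  have hsum : P *ᵥ b + (b - P *ᵥ b) = b := by abel
  have := vns_add (P *ᵥ b) (b - P *ᵥ b)
  rw [hsum, hcross] at this
  simp only [Complex.zero_re, mul_zero, add_zero] at this
  nlinarith [vns_nonneg (b - P *ᵥ b)]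

lemma vns_pinv_le {T : Matrix (Fin N3) (Fin n3) ℂ} (hT : FullColRank T) (hn : 0 < n3)
    (b : Fin N3 → ℂ) :
    vns (pinv T *ᵥ b) ≤ ((sigmaMin T)⁻¹) ^ 2 * vns b := by
  have h1 : sigmaMin T ^ 2 * vns (pinv T *ᵥ b) ≤ vns (T *ᵥ (pinv T *ᵥ b)) :=
    vns_mulVec_ge T _
  rw [Matrix.mulVec_mulVec] at h1
  have h2 : vns ((T * pinv T) *ᵥ b) ≤ vns b := vns_proj_le hT b
  have hs := sigmaMin_pos hT hn
  have h3 : sigmaMin T ^ 2 * vns (pinv T *ᵥ b) ≤ vns b := le_trans h1 h2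
  have hpos : 0 < sigmaMin T ^ 2 := pow_pos hs 2
  rw [inv_pow]
  calc vns (pinv T *ᵥ b)
      = (sigmaMin T ^ 2)⁻¹ * (sigmaMin T ^ 2 * vns (pinv T *ᵥ b)) := by
        field_simp
    _ ≤ (sigmaMin T ^ 2)⁻¹ * vns b := mul_le_mul_of_nonneg_left h3 (inv_nonneg.mpr hpos.le)

end AuxPinv

section AuxMode3

variable {m n N3 n3 n1 n2 : ℕ}

lemma mode3_fiber (T : Matrix (Fin m) (Fin n) ℂ) (A : Tensor n1 n2 n) (i : Fin n1) (j : Fin n2) :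
    (fun k => mode3 T A i j k) = T *ᵥ (fun s => A i j s) := rfl

lemma tNS_fiber (A : Tensor n1 n2 n3) : tNS A = ∑ i, ∑ j, vns (fun k => A i j k) := rfl

lemma frobNorm_mode3_le (T : Matrix (Fin m) (Fin n) ℂ) (A : Tensor n1 n2 n) :
    frobNorm (mode3 T A) ≤ specNormMat T * frobNorm A := by
  have h : tNS (mode3 T A) ≤ specNormMat T ^ 2 * tNS A := by
    rw [tNS_fiber, tNS_fiber, Finset.mul_sum]
    refine Finset.sum_le_sum fun i _ => ?_
    rw [Finset.mul_sum]
    refine Finset.sum_le_sum fun j _ => ?_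
    rw [mode3_fiber]
    exact vns_mulVec_le T _
  rw [frobNorm_eq_sqrt, frobNorm_eq_sqrt]
  calc Real.sqrt (tNS (mode3 T A)) ≤ Real.sqrt (specNormMat T ^ 2 * tNS A) := Real.sqrt_le_sqrt h
    _ = specNormMat T * Real.sqrt (tNS A) := by
        rw [Real.sqrt_mul (sq_nonneg _), Real.sqrt_sq (specNormMat_nonneg T)]

lemma frobNorm_mode3_pinv_le {T : Matrix (Fin N3) (Fin n3) ℂ} (hT : FullColRank T) (hn : 0 < n3)
    (A : Tensor n1 n2 N3) :
    frobNorm (mode3 (pinv T) A) ≤ (sigmaMin T)⁻¹ * frobNorm A := by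
  have h : tNS (mode3 (pinv T) A) ≤ ((sigmaMin T)⁻¹) ^ 2 * tNS A := by
    rw [tNS_fiber, tNS_fiber, Finset.mul_sum]
    refine Finset.sum_le_sum fun i _ => ?_
    rw [Finset.mul_sum]
    refine Finset.sum_le_sum fun j _ => ?_
    rw [mode3_fiber]
    exact vns_pinv_le hT hn _
  rw [frobNorm_eq_sqrt, frobNorm_eq_sqrt]
  calc Real.sqrt (tNS (mode3 (pinv T) A)) ≤ Real.sqrt (((sigmaMin T)⁻¹) ^ 2 * tNS A) :=
        Real.sqrt_le_sqrt h
    _ = (sigmaMin T)⁻¹ * Real.sqrt (tNS A) := by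
        rw [Real.sqrt_mul (sq_nonneg _), Real.sqrt_sq (inv_nonneg.mpr (sigmaMin_nonneg T))]

lemma mode3_mode3 (A : Matrix (Fin m) (Fin n) ℂ) (B : Matrix (Fin n) (Fin n3) ℂ)
    (X : Tensor n1 n2 n3) : mode3 A (mode3 B X) = mode3 (A * B) X := by
  funext i j k
  simp only [mode3, Matrix.mul_apply, Finset.mul_sum, Finset.sum_mul]
  rw [Finset.sum_comm]
  exact Finset.sum_congr rfl fun t _ => Finset.sum_congr rfl fun s _ => by ring

lemma mode3_one (X : Tensor n1 n2 n3) : mode3 (1 : Matrix (Fin n3) (Fin n3) ℂ) X = X := by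
  funext i j k
  simp [mode3, Matrix.one_apply, ite_mul]

lemma mode3_sub (T : Matrix (Fin m) (Fin n) ℂ) (X Y : Tensor n1 n2 n) :
    mode3 T (X - Y) = mode3 T X - mode3 T Y := by
  funext i j k
  simp [mode3, mul_sub, Finset.sum_sub_distrib]

lemma mode3_neg (T : Matrix (Fin m) (Fin n) ℂ) (X : Tensor n1 n2 n) :
    mode3 T (-X) = -mode3 T X := by
  funext i j k
  simp [mode3]

lemma mode3_smul (T : Matrix (Fin m) (Fin n) ℂ) (t : ℝ) (X : Tensor n1 n2 n) :
    mode3 T (t • X) = t • mode3 T X := by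
  funext i j k
  simp only [mode3, Pi.smul_apply, Finset.smul_sum]
  exact Finset.sum_congr rfl fun s _ => by simp [Complex.real_smul]; ring

lemma mode3_zero (T : Matrix (Fin m) (Fin n) ℂ) :
    mode3 T (0 : Tensor n1 n2 n) = 0 := by
  funext i j k
  simp [mode3]

end AuxMode3

section AuxSample

variable {n1 n2 n3 m n N3 : ℕ}

lemma frob_le_of_entrywise {A : Tensor n1 n2 n3} {B : Tensor n1 n2 n3} {c : ℝ} (hc : 0 ≤ c)
    (h : ∀ i j k, ‖A i j k‖ ≤ c * ‖B i j k‖) : frobNorm A ≤ c * frobNorm B := by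
  have hts : tNS A ≤ c ^ 2 * tNS B := by
    rw [tNS, tNS, Finset.mul_sum]
    refine Finset.sum_le_sum fun i _ => ?_
    rw [Finset.mul_sum]
    refine Finset.sum_le_sum fun j _ => ?_
    rw [Finset.mul_sum]
    refine Finset.sum_le_sum fun k _ => ?_
    calc ‖A i j k‖ ^ 2 ≤ (c * ‖B i j k‖) ^ 2 := pow_le_pow_left₀ (norm_nonneg _) (h i j k) 2
      _ = c ^ 2 * ‖B i j k‖ ^ 2 := by ring
  rw [frobNorm_eq_sqrt, frobNorm_eq_sqrt]
  calc Real.sqrt (tNS A) ≤ Real.sqrt (c ^ 2 * tNS B) := Real.sqrt_le_sqrt hts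
    _ = c * Real.sqrt (tNS B) := by rw [Real.sqrt_mul (sq_nonneg _), Real.sqrt_sq hc]

lemma frobNorm_sampleOp_le (Ω : Finset (Fin n1 × Fin n2 × Fin n3)) (A : Tensor n1 n2 n3) :
    frobNorm (sampleOp Ω A) ≤ frobNorm A := by
  have := frob_le_of_entrywise (A := sampleOp Ω A) (B := A) (c := 1) zero_le_one (fun i j k => by
    rw [one_mul, sampleOp]
    split_ifs with h
    · exact le_refl _
    · simp)
  simpa using this

lemma sampleOp_sub (Ω : Finset (Fin n1 × Fin n2 × Fin n3)) (X Y : Tensor n1 n2 n3) :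
    sampleOp Ω (X - Y) = sampleOp Ω X - sampleOp Ω Y := by
  funext i j k
  simp only [sampleOp, Pi.sub_apply]
  split_ifs with h <;> simp

lemma sampleOp_smul (Ω : Finset (Fin n1 × Fin n2 × Fin n3)) (t : ℝ) (X : Tensor n1 n2 n3) :
    sampleOp Ω (t • X) = t • sampleOp Ω X := by
  funext i j k
  simp only [sampleOp, Pi.smul_apply]
  split_ifs with h <;> simp

lemma frobNorm_reg_le (Ω : Finset (Fin n1 × Fin n2 × Fin n3)) {p : ℝ} (hp0 : 0 < p) (hp1 : p ≤ 1)
    (W : Tensor n1 n2 n3) :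
    frobNorm (W - (p⁻¹ : ℝ) • sampleOp Ω W) ≤ p⁻¹ * frobNorm W := by
  have hpi : 1 ≤ p⁻¹ := one_le_inv_iff₀.mpr ⟨hp0, hp1⟩
  refine frob_le_of_entrywise (by linarith) (fun i j k => ?_)
  simp only [Pi.sub_apply, Pi.smul_apply, sampleOp]
  split_ifs with h
  · have : W i j k - p⁻¹ • W i j k = ((1 - p⁻¹ : ℝ) : ℂ) * W i j k := by
      rw [Complex.real_smul]
      push_cast
      ring
    rw [this, norm_mul]
    have : ‖((1 - p⁻¹ : ℝ) : ℂ)‖ = p⁻¹ - 1 := by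
      rw [Complex.norm_real, Real.norm_eq_abs, abs_of_nonpos (by linarith)]
      ring
    rw [this]
    have hnn : 0 ≤ ‖W i j k‖ := norm_nonneg _
    nlinarith
  · simp only [smul_zero, sub_zero]
    have hnn : 0 ≤ ‖W i j k‖ := norm_nonneg _
    nlinarith

end AuxSample

section AuxNuc

variable {n1 n2 n3 m n : ℕ}

lemma sqrt_add_le {x y : ℝ} (hx : 0 ≤ x) (hy : 0 ≤ y) :
    Real.sqrt (x + y) ≤ Real.sqrt x + Real.sqrt y := by
  have h : x + y ≤ (Real.sqrt x + Real.sqrt y) ^ 2 := by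
    nlinarith [Real.sq_sqrt hx, Real.sq_sqrt hy, Real.sqrt_nonneg x, Real.sqrt_nonneg y]
  calc Real.sqrt (x + y) ≤ Real.sqrt ((Real.sqrt x + Real.sqrt y) ^ 2) := Real.sqrt_le_sqrt h
    _ = Real.sqrt x + Real.sqrt y := Real.sqrt_sq (by positivity)

lemma sqrt_sum_le {ι : Type*} (s : Finset ι) (f : ι → ℝ) (hf : ∀ i ∈ s, 0 ≤ f i) :
    Real.sqrt (∑ i ∈ s, f i) ≤ ∑ i ∈ s, Real.sqrt (f i) := by
  classical
  induction s using Finset.cons_induction with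
  | empty => simp
  | cons a s ha ih =>
    rw [Finset.sum_cons, Finset.sum_cons]
    refine le_trans (sqrt_add_le (hf a (Finset.mem_cons_self a s))
      (Finset.sum_nonneg fun i hi => hf i (Finset.mem_cons_of_mem hi))) ?_
    exact add_le_add le_rfl (ih fun i hi => hf i (Finset.mem_cons_of_mem hi))

lemma matFrobSq_eq_sum_eig (M : Matrix (Fin m) (Fin n) ℂ) :
    ∑ i, ∑ j, ‖M i j‖ ^ 2 = ∑ i, (Matrix.isHermitian_conjTranspose_mul_self M).eigenvalues i := by
  have hA := Matrix.isHermitian_conjTranspose_mul_self M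
  have htr : (Mᴴ * M).trace = ((∑ i, ∑ j, ‖M i j‖ ^ 2 : ℝ) : ℂ) := by
    rw [Matrix.trace]
    simp only [Matrix.diag, Matrix.mul_apply, Matrix.conjTranspose_apply]
    rw [Complex.ofReal_sum]
    rw [Finset.sum_comm]
    refine Finset.sum_congr rfl fun i _ => ?_
    rw [Complex.ofReal_sum]
    exact Finset.sum_congr rfl fun j _ => by
      rw [Complex.star_def, conj_mul_self]
  have htr2 : (Mᴴ * M).trace = ((∑ i, hA.eigenvalues i : ℝ) : ℂ) := by
    conv_lhs => rw [hA.spectral_theorem, Unitary.conjStarAlgAut_apply]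
    rw [Matrix.trace_mul_cycle]
    rw [show star (hA.eigenvectorUnitary : Matrix (Fin n) (Fin n) ℂ)
        * (hA.eigenvectorUnitary : Matrix (Fin n) (Fin n) ℂ) = 1 from
      Matrix.mem_unitaryGroup_iff'.mp (hA.eigenvectorUnitary).2]
    rw [Matrix.one_mul, Matrix.trace_diagonal]
    rw [Complex.ofReal_sum]
    rfl
  have := htr.symm.trans htr2
  exact_mod_cast this

lemma frobSlice_le_nucNormMat (M : Matrix (Fin m) (Fin n) ℂ) :
    Real.sqrt (∑ i, ∑ j, ‖M i j‖ ^ 2) ≤ nucNormMat M := by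
  rw [matFrobSq_eq_sum_eig]
  have h1 : ∑ i, (Matrix.isHermitian_conjTranspose_mul_self M).eigenvalues i
      = ∑ i, singVals M i ^ 2 := Finset.sum_congr rfl fun i _ => eig_eq_sq_singVals M i
  rw [h1]
  have h2 : ∑ i, singVals M i ^ 2 ≤ (∑ i, singVals M i) ^ 2 :=
    Finset.sum_sq_le_sq_sum_of_nonneg fun i _ => singVals_nonneg M i
  calc Real.sqrt (∑ i, singVals M i ^ 2) ≤ Real.sqrt ((∑ i, singVals M i) ^ 2) :=
        Real.sqrt_le_sqrt h2
    _ = ∑ i, singVals M i := Real.sqrt_sq (Finset.sum_nonneg fun i _ => singVals_nonneg M i)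
    _ = nucNormMat M := rfl

lemma frobNorm_le_tNucNorm (A : Tensor n1 n2 n3) : frobNorm A ≤ tNucNorm A := by
  have h0 : tNS A = ∑ k, ∑ i, ∑ j, ‖A i j k‖ ^ 2 := by
    rw [tNS]
    rw [sum_swap3]
    exact Finset.sum_congr rfl fun k _ => Finset.sum_comm
  rw [frobNorm_eq_sqrt, h0]
  calc Real.sqrt (∑ k, ∑ i, ∑ j, ‖A i j k‖ ^ 2)
      ≤ ∑ k, Real.sqrt (∑ i, ∑ j, ‖A i j k‖ ^ 2) :=
        sqrt_sum_le _ _ fun k _ =>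
          Finset.sum_nonneg fun _ _ => Finset.sum_nonneg fun _ _ => sq_nonneg _
    _ ≤ ∑ k, nucNormMat (slice A k) :=
        Finset.sum_le_sum fun k _ => frobSlice_le_nucNormMat (slice A k)
    _ = tNucNorm A := rfl

end AuxNuc



section AuxFinal

variable {n1 n2 n3 N3 r : ℕ}

lemma PS_sub (U : Tensor n1 r n3) (V : Tensor n2 r n3) (X Y : Tensor n1 n2 n3) :
    PS U V (X - Y) = PS U V X - PS U V Y := by
  simp only [PS, tprod_sub_right, tprod_sub_left]
  abel

lemma PS_neg (U : Tensor n1 r n3) (V : Tensor n2 r n3) (X : Tensor n1 n2 n3) :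
    PS U V (-X) = -PS U V X := by
  simp only [PS, tprod_neg_right, tprod_neg_left]
  abel

lemma PS_smul (U : Tensor n1 r n3) (V : Tensor n2 r n3) (t : ℝ) (X : Tensor n1 n2 n3) :
    PS U V (t • X) = t • PS U V X := by
  simp only [PS, tprod_smul_right, tprod_smul_left, smul_add, smul_sub]

lemma isoOp_smul (T : Matrix (Fin N3) (Fin n3) ℂ) (U : Tensor n1 r N3) (V : Tensor n2 r N3)
    (Ω : Finset (Fin n1 × Fin n2 × Fin n3)) (p t : ℝ) (Z : Tensor n1 n2 N3) :
    isoOp T U V Ω p (t • Z) = t • isoOp T U V Ω p Z := by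
  simp only [isoOp, PS_smul, mode3_smul, sampleOp_smul, smul_comm (p⁻¹ : ℝ) t, smul_sub]

lemma opNorm_apply_le {a b c : ℕ} (L : Tensor a b c → Tensor a b c) {C M : ℝ} (hC : 0 ≤ C)
    (hb : ∀ Z, frobNorm (L Z) ≤ C * frobNorm Z)
    (hhom : ∀ (t : ℝ) (Z), L (t • Z) = t • L Z)
    (hM : opNormT L ≤ M) (Z : Tensor a b c) :
    frobNorm (L Z) ≤ M * frobNorm Z := by
  by_cases h0 : frobNorm Z = 0
  · have hZ : Z = 0 := eq_zero_of_frobNorm_nonpos (le_of_eq h0)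
    have hL0 : L 0 = 0 := by
      have h := hhom 0 0
      rw [smul_zero] at h
      rw [h, zero_smul]
    rw [hZ, hL0, frobNorm_zero, mul_zero]
  · have hpos : 0 < frobNorm Z := lt_of_le_of_ne (frobNorm_nonneg Z) (Ne.symm h0)
    set t : ℝ := (frobNorm Z)⁻¹ with ht
    have htn : 0 ≤ t := inv_nonneg.mpr hpos.le
    have hmem : frobNorm (L (t • Z)) ∈
        {x : ℝ | ∃ W : Tensor a b c, frobNorm W ≤ 1 ∧ x = frobNorm (L W)} := by
      refine ⟨t • Z, ?_, rfl⟩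
      rw [frobNorm_smul, abs_of_nonneg htn, ht, inv_mul_cancel₀ h0]
    have hbdd : BddAbove {x : ℝ | ∃ W : Tensor a b c, frobNorm W ≤ 1 ∧ x = frobNorm (L W)} := by
      refine ⟨C, ?_⟩
      rintro x ⟨W, hW, rfl⟩
      calc frobNorm (L W) ≤ C * frobNorm W := hb W
        _ ≤ C * 1 := mul_le_mul_of_nonneg_left hW hC
        _ = C := mul_one C
    have hle : frobNorm (L (t • Z)) ≤ M := le_trans (le_csSup hbdd hmem) hM
    rw [hhom, frobNorm_smul, abs_of_nonneg htn] at hle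
    calc frobNorm (L Z) = frobNorm Z * (t * frobNorm (L Z)) := by
          rw [ht]; field_simp
      _ ≤ frobNorm Z * M := mul_le_mul_of_nonneg_left hle hpos.le
      _ = M * frobNorm Z := mul_comm _ _

lemma isoOp_frob_bound {T : Matrix (Fin N3) (Fin n3) ℂ} {U : Tensor n1 r N3} {V : Tensor n2 r N3}
    {Ω : Finset (Fin n1 × Fin n2 × Fin n3)} {p : ℝ}
    (hT : FullColRank T) (hn : 0 < n3)
    (hU : ∀ k : Fin N3, (slice U k)ᴴ * slice U k = 1)
    (hV : ∀ k : Fin N3, (slice V k)ᴴ * slice V k = 1)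
    (hp0 : 0 < p) (Z : Tensor n1 n2 N3) :
    frobNorm (isoOp T U V Ω p Z)
      ≤ (specNormMat T * ((sigmaMin T)⁻¹ * (p⁻¹ + 1))) * frobNorm Z := by
  have hsmax := specNormMat_nonneg T
  have hsmin : (0:ℝ) ≤ (sigmaMin T)⁻¹ := inv_nonneg.mpr (sigmaMin_nonneg T)
  have hpinv : (0:ℝ) ≤ p⁻¹ := inv_nonneg.mpr hp0.le
  have hPSZ : frobNorm (PS U V Z) ≤ frobNorm Z := frobNorm_PS_le hU hV Z
  have hW1 : frobNorm (mode3 (pinv T) (PS U V Z)) ≤ (sigmaMin T)⁻¹ * frobNorm Z := by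
    calc frobNorm (mode3 (pinv T) (PS U V Z))
        ≤ (sigmaMin T)⁻¹ * frobNorm (PS U V Z) := frobNorm_mode3_pinv_le hT hn _
      _ ≤ (sigmaMin T)⁻¹ * frobNorm Z := mul_le_mul_of_nonneg_left hPSZ hsmin
  have hterm1 : frobNorm (PS U V (mode3 T ((p⁻¹ : ℝ) • sampleOp Ω (mode3 (pinv T) (PS U V Z)))))
      ≤ specNormMat T * (p⁻¹ * ((sigmaMin T)⁻¹ * frobNorm Z)) := by
    calc frobNorm (PS U V (mode3 T ((p⁻¹ : ℝ) • sampleOp Ω (mode3 (pinv T) (PS U V Z)))))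
        ≤ frobNorm (mode3 T ((p⁻¹ : ℝ) • sampleOp Ω (mode3 (pinv T) (PS U V Z)))) :=
          frobNorm_PS_le hU hV _
      _ ≤ specNormMat T * frobNorm ((p⁻¹ : ℝ) • sampleOp Ω (mode3 (pinv T) (PS U V Z))) :=
          frobNorm_mode3_le T _
      _ = specNormMat T * (p⁻¹ * frobNorm (sampleOp Ω (mode3 (pinv T) (PS U V Z)))) := by
          rw [frobNorm_smul, abs_of_nonneg hpinv]
      _ ≤ specNormMat T * (p⁻¹ * frobNorm (mode3 (pinv T) (PS U V Z))) := by
          refine mul_le_mul_of_nonneg_left (mul_le_mul_of_nonneg_left ?_ hpinv) hsmax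
          exact frobNorm_sampleOp_le Ω _
      _ ≤ specNormMat T * (p⁻¹ * ((sigmaMin T)⁻¹ * frobNorm Z)) :=
          mul_le_mul_of_nonneg_left (mul_le_mul_of_nonneg_left hW1 hpinv) hsmax
  have hterm2 : frobNorm (PS U V (mode3 T (mode3 (pinv T) (PS U V Z))))
      ≤ specNormMat T * ((sigmaMin T)⁻¹ * frobNorm Z) := by
    calc frobNorm (PS U V (mode3 T (mode3 (pinv T) (PS U V Z))))
        ≤ frobNorm (mode3 T (mode3 (pinv T) (PS U V Z))) := frobNorm_PS_le hU hV _
      _ ≤ specNormMat T * frobNorm (mode3 (pinv T) (PS U V Z)) := frobNorm_mode3_le T _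
      _ ≤ specNormMat T * ((sigmaMin T)⁻¹ * frobNorm Z) :=
          mul_le_mul_of_nonneg_left hW1 hsmax
  calc frobNorm (isoOp T U V Ω p Z)
      ≤ frobNorm (PS U V (mode3 T ((p⁻¹ : ℝ) • sampleOp Ω (mode3 (pinv T) (PS U V Z)))))
        + frobNorm (PS U V (mode3 T (mode3 (pinv T) (PS U V Z)))) := frobNorm_sub_le _ _
    _ ≤ specNormMat T * (p⁻¹ * ((sigmaMin T)⁻¹ * frobNorm Z))
        + specNormMat T * ((sigmaMin T)⁻¹ * frobNorm Z) := add_le_add hterm1 hterm2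
    _ = (specNormMat T * ((sigmaMin T)⁻¹ * (p⁻¹ + 1))) * frobNorm Z := by ring

end AuxFinal


/-- **Case 2 of the optimality proof: the perturbation vanishes.** -/
theorem perturbation_vanishes {n1 n2 n3 N3 r : ℕ}
    (X : Tensor n1 n2 n3) (T : Matrix (Fin N3) (Fin n3) ℂ)
    (U : Tensor n1 r N3) (S : Tensor r r N3) (V : Tensor n2 r N3)
    (Ω : Finset (Fin n1 × Fin n2 × Fin n3)) (p : ℝ)
    (hT : FullColRank T) (hsvd : IsSkinnyTSVD (mode3 T X) r U S V)
    (hp0 : 0 < p) (hp1 : p ≤ 1)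
    (h1 : opNormT (isoOp T U V Ω p) ≤ 1 / 2)
    (H : Tensor n1 n2 n3) (hH : sampleOp Ω H = 0)
    (hHn : tNucNorm (PSperp U V (mode3 T H)) ≤
      p / (4 * kappa T) * frobNorm (PS U V (mode3 T H))) :
    H = 0 := by
  rcases Nat.eq_zero_or_pos n3 with hn3 | hn3
  · subst hn3
    funext i j k
    exact k.elim0
  have hU := hsvd.U_orth
  have hV := hsvd.V_orth
  have hsmax := specNormMat_nonneg T
  have hsminpos := sigmaMin_pos hT hn3
  have hsmin : (0:ℝ) ≤ (sigmaMin T)⁻¹ := inv_nonneg.mpr (sigmaMin_nonneg T)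
  have hpinv : (0:ℝ) ≤ p⁻¹ := inv_nonneg.mpr hp0.le
  have hkpos := kappa_pos hT hn3
  have hk1 := one_le_kappa hT hn3
  set Z : Tensor n1 n2 N3 := mode3 T H with hZdef
  set A : Tensor n1 n2 N3 := PS U V Z with hAdef
  set B : Tensor n1 n2 N3 := PSperp U V Z with hBdef
  set W : Tensor n1 n2 n3 := mode3 (pinv T) B with hWdef
  have hHrec : mode3 (pinv T) Z = H := by
    rw [hZdef, mode3_mode3, pinv_mul hT, mode3_one]
  have hZAB : Z = A + B := by rw [hAdef, hBdef, PSperp]; abel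
  have hPSZ : mode3 (pinv T) A = H - W := by
    have hAe : A = Z - B := by rw [hAdef, hBdef, PSperp]; abel
    rw [hAe, mode3_sub, hHrec, hWdef]
  have hkey : A + isoOp T U V Ω p Z
      = PS U V (mode3 T (W - (p⁻¹ : ℝ) • sampleOp Ω W)) := by
    rw [show isoOp T U V Ω p Z
        = PS U V (mode3 T ((p⁻¹ : ℝ) • sampleOp Ω (mode3 (pinv T) (PS U V Z))))
          - PS U V (mode3 T (mode3 (pinv T) (PS U V Z))) from rfl]
    rw [← hAdef, hPSZ, sampleOp_sub, hH, zero_sub, smul_neg, mode3_neg, PS_neg]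
    rw [mode3_sub T H W, ← hZdef, PS_sub]
    rw [mode3_sub T W ((p⁻¹ : ℝ) • sampleOp Ω W), PS_sub]
    rw [← hAdef]
    abel
  have hCnn : (0:ℝ) ≤ specNormMat T * ((sigmaMin T)⁻¹ * (p⁻¹ + 1)) := by positivity
  have hLZ : frobNorm (isoOp T U V Ω p Z) ≤ 1 / 2 * frobNorm Z :=
    opNorm_apply_le (isoOp T U V Ω p) hCnn (isoOp_frob_bound hT hn3 hU hV hp0)
      (fun t Z' => isoOp_smul T U V Ω p t Z') h1 Z
  have hZn : frobNorm Z ≤ frobNorm A + frobNorm B := by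
    calc frobNorm Z = frobNorm (A + B) := by rw [← hZAB]
      _ ≤ frobNorm A + frobNorm B := frobNorm_add_le A B
  have hBn : frobNorm B ≤ p / (4 * kappa T) * frobNorm A :=
    le_trans (frobNorm_le_tNucNorm B) hHn
  have hWn : frobNorm W ≤ (sigmaMin T)⁻¹ * frobNorm B := by
    rw [hWdef]
    exact frobNorm_mode3_pinv_le hT hn3 B
  have hRHS : frobNorm (PS U V (mode3 T (W - (p⁻¹ : ℝ) • sampleOp Ω W)))
      ≤ specNormMat T * (p⁻¹ * ((sigmaMin T)⁻¹ * frobNorm B)) := by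
    calc frobNorm (PS U V (mode3 T (W - (p⁻¹ : ℝ) • sampleOp Ω W)))
        ≤ frobNorm (mode3 T (W - (p⁻¹ : ℝ) • sampleOp Ω W)) := frobNorm_PS_le hU hV _
      _ ≤ specNormMat T * frobNorm (W - (p⁻¹ : ℝ) • sampleOp Ω W) := frobNorm_mode3_le T _
      _ ≤ specNormMat T * (p⁻¹ * frobNorm W) :=
          mul_le_mul_of_nonneg_left (frobNorm_reg_le Ω hp0 hp1 W) hsmax
      _ ≤ specNormMat T * (p⁻¹ * ((sigmaMin T)⁻¹ * frobNorm B)) :=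
          mul_le_mul_of_nonneg_left (mul_le_mul_of_nonneg_left hWn hpinv) hsmax
  have hAn : frobNorm A
      ≤ specNormMat T * (p⁻¹ * ((sigmaMin T)⁻¹ * frobNorm B))
        + 1 / 2 * (frobNorm A + frobNorm B) := by
    calc frobNorm A
        = frobNorm ((A + isoOp T U V Ω p Z) - isoOp T U V Ω p Z) := by
          rw [add_sub_cancel_right]
      _ ≤ frobNorm (A + isoOp T U V Ω p Z) + frobNorm (isoOp T U V Ω p Z) :=
          frobNorm_sub_le _ _
      _ ≤ specNormMat T * (p⁻¹ * ((sigmaMin T)⁻¹ * frobNorm B))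
          + 1 / 2 * (frobNorm A + frobNorm B) := by
          refine add_le_add ?_ (le_trans hLZ (by linarith))
          rw [hkey]
          exact hRHS
  have hc1 : specNormMat T * (p⁻¹ * ((sigmaMin T)⁻¹ * frobNorm B))
      = kappa T / p * frobNorm B := by
    rw [kappa, div_div, div_eq_mul_inv, mul_inv]
    ring
  have hc2 : kappa T / p * frobNorm B ≤ 1 / 4 * frobNorm A := by
    calc kappa T / p * frobNorm B
        ≤ kappa T / p * (p / (4 * kappa T) * frobNorm A) :=
          mul_le_mul_of_nonneg_left hBn (by positivity)
      _ = 1 / 4 * frobNorm A := by field_simp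
  have hy4 : frobNorm B ≤ 1 / 4 * frobNorm A := by
    have hq : p / (4 * kappa T) ≤ 1 / 4 := by
      rw [div_le_div_iff₀ (by positivity) (by norm_num)]
      nlinarith
    calc frobNorm B ≤ p / (4 * kappa T) * frobNorm A := hBn
      _ ≤ 1 / 4 * frobNorm A := mul_le_mul_of_nonneg_right hq (frobNorm_nonneg A)
  have hAfin : frobNorm A ≤ 0 := by
    rw [hc1] at hAn
    linarith [frobNorm_nonneg A, frobNorm_nonneg B]
  have hA0 : A = 0 := eq_zero_of_frobNorm_nonpos hAfin
  have hB0 : B = 0 := by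
    refine eq_zero_of_frobNorm_nonpos ?_
    rw [hA0, frobNorm_zero, mul_zero] at hBn
    exact hBn
  have hZ0 : Z = 0 := by rw [hZAB, hA0, hB0, add_zero]
  rw [← hHrec, hZ0]
  exact mode3_zero (pinv T)

end TC
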